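/- arXiv:0903.2816 — 4 statements merged into one kernel-verified Lean document; each statement's English description precedes it below -/
import Mathlib

section
/- Let T = (V, F, w) be a tree with positive edge weights, with Laplacian L_T, and let M be the Moore–Penrose pseudoinverse of L_T. Let u, v ∈ V with u ≠ v, and let e_1, …, e_k be the edges of the unique simple path in T from u to v. Then (ψ_u − ψ_v)ᵀ M (ψ_u − ψ_v) = Σ_{i=1}^{k} 1/w(e_i). -/
open Matrix

/-- The rank-one Laplacian contribution `(ψ_u - ψ_v)(ψ_u - ψ_v)ᵀ` of an edge,
as a function on unordered pairs. -/
noncomputable def edgeLap {V : Type*} [DecidableEq V] : Sym2 V → Matrix V V ℝ :=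
  Sym2.lift ⟨fun u v =>
      Matrix.vecMulVec (Pi.single u 1 - Pi.single v 1) (Pi.single u 1 - Pi.single v 1),
    by
      intro u v
      ext i j
      simp [Matrix.vecMulVec]
      ring⟩

/-- The Laplacian of a weighted graph: `L_G = Σ_{e∈E} w(e) (ψ_u - ψ_v)(ψ_u - ψ_v)ᵀ`. -/
noncomputable def lapW {V : Type*} [Fintype V] [DecidableEq V]
    (G : SimpleGraph V) [DecidableRel G.Adj] (w : Sym2 V → ℝ) : Matrix V V ℝ :=
  ∑ e ∈ G.edgeFinset, w e • edgeLap e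

section Aux

variable {V : Type*} [Fintype V] [DecidableEq V]

/-- Indicator of the set of vertices reachable from `a` after deleting the edge `e`. -/
noncomputable def sideInd (T : SimpleGraph V) (e : Sym2 V) (a : V) : V → ℝ :=
  fun x => by classical exact if (T.deleteEdges {e}).Reachable a x then 1 else 0

lemma edgeLap_mk (a b : V) :
    edgeLap s(a, b) =
      Matrix.vecMulVec (Pi.single a 1 - Pi.single b 1) (Pi.single a 1 - Pi.single b 1) := by
  simp [edgeLap]

lemma single_sub_dot (a b : V) (f : V → ℝ) :
    ((Pi.single a 1 - Pi.single b 1 : V → ℝ)) ⬝ᵥ f = f a - f b := by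
  rw [sub_dotProduct, single_dotProduct, single_dotProduct]
  ring

lemma edgeLap_mulVec (a b : V) (f : V → ℝ) :
    edgeLap s(a, b) *ᵥ f = (f a - f b) • (Pi.single a 1 - Pi.single b 1 : V → ℝ) := by
  rw [edgeLap_mk]
  funext i
  simp only [Matrix.mulVec, dotProduct, Matrix.vecMulVec_apply, Pi.smul_apply,
    smul_eq_mul]
  rw [mul_comm]
  rw [show ∀ g : V → ℝ, ∑ j, (Pi.single a 1 - Pi.single b 1 : V → ℝ) i *
      (Pi.single a 1 - Pi.single b 1 : V → ℝ) j * g j =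
      (Pi.single a 1 - Pi.single b 1 : V → ℝ) i *
      ((Pi.single a 1 - Pi.single b 1 : V → ℝ) ⬝ᵥ g) from fun g => by
    simp [dotProduct, Finset.mul_sum, mul_assoc]]
  rw [single_sub_dot]

lemma edgeLap_transpose (e : Sym2 V) : (edgeLap e)ᵀ = edgeLap e := by
  induction e using Sym2.ind with
  | _ a b =>
    rw [edgeLap_mk]
    ext i j
    simp [Matrix.vecMulVec_apply, mul_comm]

lemma lapW_transpose (G : SimpleGraph V) [DecidableRel G.Adj] (w : Sym2 V → ℝ) :
    (lapW G w)ᵀ = lapW G w := by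
  unfold lapW
  rw [Matrix.transpose_sum]
  exact Finset.sum_congr rfl fun e _ => by rw [Matrix.transpose_smul, edgeLap_transpose]

lemma finset_sum_mulVec {ι : Type*} (s : Finset ι) (A : ι → Matrix V V ℝ) (x : V → ℝ) :
    (∑ i ∈ s, A i) *ᵥ x = ∑ i ∈ s, A i *ᵥ x := by
  ext j
  simp only [Matrix.mulVec, dotProduct, Finset.sum_apply, Matrix.sum_apply,
    Finset.sum_mul]
  exact Finset.sum_comm

lemma list_sum_map_sub {α : Type*} (l : List α) (f g : α → ℝ) :
    (l.map f).sum - (l.map g).sum = (l.map fun x => f x - g x).sum := by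
  induction l with
  | nil => simp
  | cons a l ih => simp only [List.map_cons, List.sum_cons, ← ih]; ring

lemma lapW_mulVec_sideInd (T : SimpleGraph V) [DecidableRel T.Adj] (hT : T.IsAcyclic)
    (w : Sym2 V → ℝ) (d : T.Dart) :
    lapW T w *ᵥ sideInd T d.edge d.fst =
      w d.edge • (Pi.single d.fst 1 - Pi.single d.snd 1 : V → ℝ) := by
  classical
  have hbridge : ¬ (T.deleteEdges {d.edge}).Reachable d.fst d.snd := by
    have hb : T.IsBridge d.edge :=
      (SimpleGraph.isAcyclic_iff_forall_edge_isBridge.mp hT) d.edge_mem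
    rcases d with ⟨⟨a, b⟩, hab⟩
    exact SimpleGraph.isBridge_iff.mp hb
  set g := sideInd T d.edge d.fst with hg
  have hterm : ∀ e ∈ T.edgeFinset, e ≠ d.edge → (w e • edgeLap e) *ᵥ g = 0 := by
    intro e he hne
    induction e using Sym2.ind with
    | _ a b =>
      have hadj : T.Adj a b := by
        rw [← SimpleGraph.mem_edgeSet]
        exact SimpleGraph.mem_edgeFinset.mp he
      have hadj' : (T.deleteEdges {d.edge}).Adj a b :=
        SimpleGraph.deleteEdges_adj.mpr ⟨hadj, by simpa using hne⟩
      have hgab : g a = g b := by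
        simp only [hg, sideInd]
        by_cases hr : (T.deleteEdges {d.edge}).Reachable d.fst a
        · rw [if_pos hr, if_pos (hr.trans hadj'.reachable)]
        · rw [if_neg hr, if_neg (fun hr' => hr (hr'.trans hadj'.symm.reachable))]
      rw [Matrix.smul_mulVec, edgeLap_mulVec, hgab, sub_self, zero_smul, smul_zero]
  have hmem : d.edge ∈ T.edgeFinset := SimpleGraph.mem_edgeFinset.mpr d.edge_mem
  have hmain : (w d.edge • edgeLap d.edge) *ᵥ g =
      w d.edge • (Pi.single d.fst 1 - Pi.single d.snd 1 : V → ℝ) := by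
    have hedge : d.edge = s(d.fst, d.snd) := rfl
    have h1 : g d.fst = 1 := by
      simp only [hg, sideInd]
      rw [if_pos (SimpleGraph.Reachable.refl _)]
    have h0 : g d.snd = 0 := by
      simp only [hg, sideInd]
      rw [if_neg hbridge]
    rw [Matrix.smul_mulVec, hedge, edgeLap_mulVec, h1, h0, sub_zero, one_smul]
  unfold lapW
  rw [finset_sum_mulVec]
  rw [Finset.sum_eq_single_of_mem d.edge hmem (fun e he hne => hterm e he hne), hmain]

lemma walk_darts_telescope {G : SimpleGraph V} {u v : V} (p : G.Walk u v) :
    (p.darts.map fun d => (Pi.single d.fst 1 - Pi.single d.snd 1 : V → ℝ)).sum =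
      Pi.single u 1 - Pi.single v 1 := by
  induction p with
  | nil => simp
  | cons h q ih =>
    rw [SimpleGraph.Walk.darts_cons, List.map_cons, List.sum_cons, ih]
    abel

lemma path_dart_sides {T : SimpleGraph V} {u v : V} (p : T.Walk u v) (hp : p.IsPath) :
    ∀ d ∈ p.darts, (T.deleteEdges {d.edge}).Reachable u d.fst ∧
      (T.deleteEdges {d.edge}).Reachable d.snd v := by
  induction p with
  | nil => intro d hd; simp at hd
  | @cons u x v h q ih =>
    intro d hd
    have hq : q.IsPath := (SimpleGraph.Walk.cons_isPath_iff h q).mp hp |>.1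
    have hnodup : (SimpleGraph.Walk.cons h q).edges.Nodup := hp.isTrail.edges_nodup
    have hnotin : s(u, x) ∉ q.edges := by
      rw [SimpleGraph.Walk.edges_cons] at hnodup
      exact (List.nodup_cons.mp hnodup).1
    rw [SimpleGraph.Walk.darts_cons] at hd
    rcases List.mem_cons.mp hd with rfl | hd'
    · constructor
      · exact SimpleGraph.Reachable.refl _
      · exact ⟨q.toDeleteEdges {s(u, x)} (fun e he => by
          simp only [Set.mem_singleton_iff]
          exact fun h' => hnotin (h' ▸ he))⟩
    · have hne : d.edge ≠ s(u, x) := by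
        intro heq
        exact hnotin (heq ▸ (List.mem_map_of_mem (f := SimpleGraph.Dart.edge) hd'))
      have hadj' : (T.deleteEdges {d.edge}).Adj u x :=
        SimpleGraph.deleteEdges_adj.mpr ⟨h, by simp [Ne.symm hne]⟩
      obtain ⟨h1, h2⟩ := ih hq d hd'
      exact ⟨hadj'.reachable.trans h1, h2⟩

lemma mulVec_list_sum {n : ℕ} (A : Matrix V V ℝ) (l : List (V → ℝ)) :
    A *ᵥ l.sum = (l.map fun x => A *ᵥ x).sum := by
  induction l with
  | nil => simp [Matrix.mulVec_zero]
  | cons x l ih => rw [List.sum_cons, Matrix.mulVec_add, ih, List.map_cons, List.sum_cons]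

lemma list_sum_apply (l : List (V → ℝ)) (x : V) : l.sum x = (l.map fun f => f x).sum := by
  induction l with
  | nil => simp
  | cons f l ih => simp [ih]

lemma dot_mulVec_left (A : Matrix V V ℝ) (x z : V → ℝ) :
    (A *ᵥ x) ⬝ᵥ z = x ⬝ᵥ (Aᵀ *ᵥ z) := by
  rw [dotProduct_comm, Matrix.dotProduct_mulVec, ← Matrix.mulVec_transpose,
    dotProduct_comm]

end Aux

/-- If `T` is a tree with positive edge weights, `M` is the Moore–Penrose pseudoinverse of
its Laplacian `L_T`, `u ≠ v`, and `p` is the (unique) simple path in `T` from `u` to `v`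
with edges `e_1, …, e_k`, then `(ψ_u − ψ_v)ᵀ M (ψ_u − ψ_v) = Σ_i 1 / w(e_i)`. -/
theorem tree_lap_pinv_quadForm {V : Type*} [Fintype V] [DecidableEq V]
    (T : SimpleGraph V) [DecidableRel T.Adj] (hT : T.IsTree)
    (w : Sym2 V → ℝ) (hw : ∀ e ∈ T.edgeSet, 0 < w e)
    (M : Matrix V V ℝ)
    (hM1 : lapW T w * M * lapW T w = lapW T w)
    (hM2 : M * lapW T w * M = M)
    (hM3 : (lapW T w * M)ᵀ = lapW T w * M)
    (hM4 : (M * lapW T w)ᵀ = M * lapW T w)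
    (u v : V) (huv : u ≠ v) (p : T.Walk u v) (hp : p.IsPath) :
    (Pi.single u 1 - Pi.single v 1) ⬝ᵥ (M *ᵥ (Pi.single u 1 - Pi.single v 1)) =
      (p.edges.map fun e => 1 / w e).sum := by
  classical
  set L := lapW T w with hL
  set f : V → ℝ := (p.darts.map fun d => (1 / w d.edge) • sideInd T d.edge d.fst).sum with hf
  set χ : V → ℝ := Pi.single u 1 - Pi.single v 1 with hχ
  -- L *ᵥ f = χ
  have hLf : L *ᵥ f = χ := by
    rw [hf, mulVec_list_sum (n := 0), List.map_map]
    have : (fun d : T.Dart => L *ᵥ ((1 / w d.edge) • sideInd T d.edge d.fst)) ∘ id =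
        fun d : T.Dart => (1 / w d.edge) • (L *ᵥ sideInd T d.edge d.fst) := by
      funext d
      simp [Matrix.mulVec_smul]
    have hmap : p.darts.map (Matrix.mulVec L ∘ fun d : T.Dart =>
        (1 / w d.edge) • sideInd T d.edge d.fst) =
        p.darts.map fun d => (Pi.single d.fst 1 - Pi.single d.snd 1 : V → ℝ) := by
      apply List.map_congr_left
      intro d hd
      have hw' : w d.edge ≠ 0 := ne_of_gt (hw d.edge d.edge_mem)
      simp only [Function.comp_apply]
      rw [Matrix.mulVec_smul, lapW_mulVec_sideInd T hT.IsAcyclic w d, smul_smul,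
        one_div, inv_mul_cancel₀ hw', one_smul]
    rw [hmap, walk_darts_telescope]
  -- quadratic form reduces to f ⬝ᵥ χ
  have hquad : χ ⬝ᵥ (M *ᵥ χ) = f ⬝ᵥ χ := by
    conv_lhs => rw [← hLf]
    rw [Matrix.mulVec_mulVec, dot_mulVec_left, Matrix.mulVec_mulVec, lapW_transpose,
      ← hL, ← Matrix.mul_assoc, hM1, hLf]
  -- evaluate f ⬝ᵥ χ
  have hside : ∀ d ∈ p.darts, sideInd T d.edge d.fst u = 1 ∧ sideInd T d.edge d.fst v = 0 := by
    intro d hd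
    obtain ⟨h1, h2⟩ := path_dart_sides p hp d hd
    have hbridge : ¬ (T.deleteEdges {d.edge}).Reachable d.fst d.snd := by
      have hb : T.IsBridge d.edge :=
        (SimpleGraph.isAcyclic_iff_forall_edge_isBridge.mp hT.IsAcyclic) d.edge_mem
      rcases d with ⟨⟨a, b⟩, hab⟩
      exact SimpleGraph.isBridge_iff.mp hb
    constructor
    · simp only [sideInd]
      rw [if_pos h1.symm]
    · simp only [sideInd]
      rw [if_neg (fun hr => hbridge (hr.trans h2.symm))]
  have hfu : f ⬝ᵥ χ = (p.darts.map fun d => 1 / w d.edge).sum := by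
    rw [hχ, dotProduct_sub, dotProduct_single, dotProduct_single,
      mul_one, mul_one, hf, list_sum_apply, list_sum_apply, List.map_map, List.map_map,
      list_sum_map_sub]
    congr 1
    apply List.map_congr_left
    intro d hd
    obtain ⟨h1, h0⟩ := hside d hd
    simp only [Function.comp_apply, Pi.smul_apply, smul_eq_mul, h1, h0]
    ring
  rw [hquad, hfu, SimpleGraph.Walk.edges, List.map_map]
  rfl
end

section
/- Let G = (V, E, w) be a connected weighted graph with positive edge weights and let T = (V, F, w) be a spanning tree of G, with Laplacians L_G and L_T respectively. Let M be the Moore–Penrose pseudoinverse of L_T. Then trace(L_G · M) = st_T(G), the stretch of G with respect to T. -/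
set_option linter.unusedSectionVars false


open Matrix

/-- The sum `Σ_i 1 / w(e_i)` over the edges `e_1, …, e_k` of the unique simple path in the
tree `T` from `u` to `v`. -/
noncomputable def treePathWeight {V : Type*} (T : SimpleGraph V) (hT : T.IsTree)
    (w : Sym2 V → ℝ) (u v : V) : ℝ :=
  (((hT.existsUnique_path u v).choose.edges).map fun e => 1 / w e).sum

lemma treePathWeight_symm {V : Type*} (T : SimpleGraph V) (hT : T.IsTree)
    (w : Sym2 V → ℝ) (u v : V) :
    treePathWeight T hT w u v = treePathWeight T hT w v u := by
  have h1 := (hT.existsUnique_path u v).choose_spec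
  have h2 := (hT.existsUnique_path v u).choose_spec
  have hrev : (hT.existsUnique_path u v).choose.reverse = (hT.existsUnique_path v u).choose :=
    h2.2 _ h1.1.reverse
  unfold treePathWeight
  rw [← hrev, SimpleGraph.Walk.edges_reverse, List.map_reverse, List.sum_reverse]

/-- The stretch `st_T(e) = w(e) · Σ_i 1 / w(e_i)` of an unordered pair `e`, where
`e_1, …, e_k` are the edges of the unique simple path in `T` joining the endpoints of `e`. -/
noncomputable def stretchEdge {V : Type*} (T : SimpleGraph V) (hT : T.IsTree)
    (w : Sym2 V → ℝ) : Sym2 V → ℝ :=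
  Sym2.lift ⟨fun u v => w s(u, v) * treePathWeight T hT w u v,
    by
      intro u v
      simp only []
      rw [Sym2.eq_swap, treePathWeight_symm]⟩

/-- The stretch of `G` with respect to the spanning tree `T`:
`st_T(G) = Σ_{e∈E} st_T(e)`. -/
noncomputable def stretch {V : Type*} [Fintype V] [DecidableEq V]
    (G : SimpleGraph V) [DecidableRel G.Adj] (T : SimpleGraph V) (hT : T.IsTree)
    (w : Sym2 V → ℝ) : ℝ :=
  ∑ e ∈ G.edgeFinset, stretchEdge T hT w e

section Aux0

variable {V : Type*} [DecidableEq V] (T : SimpleGraph V) (hT : T.IsTree)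

noncomputable def pth (u v : V) : T.Walk u v := (hT.existsUnique_path u v).choose

lemma pth_isPath (u v : V) : (pth T hT u v).IsPath :=
  (hT.existsUnique_path u v).choose_spec.1

lemma pth_eq {u v : V} (p : T.Walk u v) (hp : p.IsPath) : pth T hT u v = p :=
  ((hT.existsUnique_path u v).choose_spec.2 p hp).symm

lemma edges_pth_self (b : V) : (pth T hT b b).edges = [] := by
  rw [pth_eq T hT (SimpleGraph.Walk.nil) SimpleGraph.Walk.IsPath.nil]
  rfl

lemma edges_pth_adj {a b : V} (hab : T.Adj a b) : (pth T hT a b).edges = [s(a, b)] := by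
  have hp : (SimpleGraph.Walk.cons hab SimpleGraph.Walk.nil : T.Walk a b).IsPath := by
    simp [SimpleGraph.Walk.cons_isPath_iff, hab.ne]
  rw [pth_eq T hT _ hp]
  rfl

lemma pth_edges_adj_cases {z c : V} (hzc : T.Adj z c) (b : V) :
    (pth T hT z b).edges = s(z, c) :: (pth T hT c b).edges ∨
      (pth T hT c b).edges = s(z, c) :: (pth T hT z b).edges := by
  by_cases hz : z ∈ (pth T hT c b).support
  · right
    have h1 : ((pth T hT c b).takeUntil z hz).IsPath := (pth_isPath T hT c b).takeUntil hz
    have h2 : (SimpleGraph.Walk.cons hzc.symm SimpleGraph.Walk.nil : T.Walk c z).IsPath := by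
      simp [SimpleGraph.Walk.cons_isPath_iff, hzc.ne']
    have he : (pth T hT c b).takeUntil z hz =
        SimpleGraph.Walk.cons hzc.symm SimpleGraph.Walk.nil := by
      rw [← pth_eq T hT _ h1, ← pth_eq T hT _ h2]
    have hd : (pth T hT c b).dropUntil z hz = pth T hT z b :=
      (pth_eq T hT _ ((pth_isPath T hT c b).dropUntil hz)).symm
    have hs := SimpleGraph.Walk.take_spec (pth T hT c b) hz
    calc (pth T hT c b).edges
        = (((pth T hT c b).takeUntil z hz).append ((pth T hT c b).dropUntil z hz)).edges := by
          rw [hs]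
      _ = s(z, c) :: (pth T hT z b).edges := by
          rw [SimpleGraph.Walk.edges_append, he, hd]
          simp [Sym2.eq_swap]
  · left
    have hp : (SimpleGraph.Walk.cons hzc (pth T hT c b) : T.Walk z b).IsPath :=
      (pth_isPath T hT c b).cons hz
    rw [pth_eq T hT _ hp]
    rfl

lemma pth_edges_mem_iff {z c : V} (hzc : T.Adj z c) (b : V) {e : Sym2 V}
    (hne : e ≠ s(z, c)) :
    e ∈ (pth T hT z b).edges ↔ e ∈ (pth T hT c b).edges := by
  rcases pth_edges_adj_cases T hT hzc b with h | h <;> rw [h] <;> simp [hne]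

end Aux0

section Aux
variable {V : Type*} [Fintype V] [DecidableEq V]

def chiv (u v : V) : V → ℝ := Pi.single u 1 - Pi.single v 1

lemma dotProduct_chiv (y : V → ℝ) (u v : V) : chiv u v ⬝ᵥ y = y u - y v := by
  simp [chiv, dotProduct, sub_mul, Finset.sum_sub_distrib, Pi.single_apply, ite_mul]

lemma chiv_dotProduct (y : V → ℝ) (u v : V) : y ⬝ᵥ chiv u v = y u - y v := by
  rw [dotProduct_comm, dotProduct_chiv]

lemma edgeLap_mk_s2 (u v : V) : edgeLap s(u, v) = vecMulVec (chiv u v) (chiv u v) := by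
  simp [edgeLap, chiv]

lemma edgeLap_mulVec_s2 (u v : V) (y : V → ℝ) :
    edgeLap s(u, v) *ᵥ y = (y u - y v) • chiv u v := by
  ext i
  simp only [edgeLap_mk_s2, mulVec, dotProduct, vecMulVec_apply, Pi.smul_apply, smul_eq_mul]
  simp only [mul_assoc]
  rw [← Finset.mul_sum]
  rw [show (∑ j, chiv u v j * y j) = chiv u v ⬝ᵥ y from rfl, dotProduct_chiv]
  ring

lemma lapW_mulVec (G : SimpleGraph V) [DecidableRel G.Adj] (w : Sym2 V → ℝ) (y : V → ℝ) :
    lapW G w *ᵥ y = ∑ e ∈ G.edgeFinset, w e • (edgeLap e *ᵥ y) := by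
  ext i
  simp only [lapW, mulVec, dotProduct, Matrix.sum_apply, Matrix.smul_apply, smul_eq_mul,
    Finset.sum_mul, Pi.smul_apply, Finset.sum_apply, Finset.mul_sum]
  rw [Finset.sum_comm]
  simp [mul_assoc]

lemma trace_edgeLap_mul (u v : V) (M : Matrix V V ℝ) :
    (edgeLap s(u, v) * M).trace = chiv u v ⬝ᵥ (M *ᵥ chiv u v) := by
  simp only [edgeLap_mk_s2, Matrix.trace, Matrix.diag_apply, Matrix.mul_apply, vecMulVec_apply,
    dotProduct, mulVec]
  rw [Finset.sum_comm]
  refine Finset.sum_congr rfl fun k _ => ?_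
  rw [Finset.mul_sum]
  refine Finset.sum_congr rfl fun i _ => ?_
  ring

lemma quad_form_eq (L M : Matrix V V ℝ) (hsym : Lᵀ = L) (hM1 : L * M * L = L)
    (y χ : V → ℝ) (hy : L *ᵥ y = χ) :
    χ ⬝ᵥ (M *ᵥ χ) = χ ⬝ᵥ y := by
  have hχ : χ = y ᵥ* L := by rw [← hy]; nth_rewrite 1 [← hsym]; rw [mulVec_transpose]
  calc χ ⬝ᵥ (M *ᵥ χ) = χ ⬝ᵥ ((M * L) *ᵥ y) := by rw [← hy, mulVec_mulVec]
    _ = (y ᵥ* L) ⬝ᵥ ((M * L) *ᵥ y) := by rw [← hχ]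
    _ = ((y ᵥ* L) ᵥ* (M * L)) ⬝ᵥ y := by rw [dotProduct_mulVec]
    _ = (y ᵥ* (L * M * L)) ⬝ᵥ y := by rw [vecMul_vecMul, Matrix.mul_assoc]
    _ = χ ⬝ᵥ y := by rw [hM1, ← hχ]

end Aux

section Aux2
variable {V : Type*} [Fintype V] [DecidableEq V] (T : SimpleGraph V) (hT : T.IsTree)
  (w : Sym2 V → ℝ)

noncomputable def fv (a b : V) : V → ℝ := fun z =>
  if s(a, b) ∈ (pth T hT z b).edges then 1 / w s(a, b) else 0

lemma fv_mulVec [DecidableRel T.Adj] {a b : V} (hab : T.Adj a b) (hwab : w s(a, b) ≠ 0) :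
    lapW T w *ᵥ fv T hT w a b = chiv a b := by
  rw [lapW_mulVec]
  rw [Finset.sum_eq_single s(a, b)]
  · rw [edgeLap_mulVec_s2]
    have h1 : fv T hT w a b a = 1 / w s(a, b) := by
      simp [fv, edges_pth_adj T hT hab]
    have h2 : fv T hT w a b b = 0 := by
      simp [fv, edges_pth_self T hT b]
    rw [h1, h2, sub_zero, smul_smul, mul_one_div, div_self hwab, one_smul]
  · intro e he hne
    induction e using Sym2.ind with
    | _ z c =>
      have hzc : T.Adj z c := by
        rw [SimpleGraph.mem_edgeFinset, SimpleGraph.mem_edgeSet] at he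
        exact he
      rw [edgeLap_mulVec_s2]
      have : fv T hT w a b z = fv T hT w a b c := by
        have hiff := pth_edges_mem_iff T hT hzc b (e := s(a, b)) (fun h => hne h.symm)
        simp only [fv, hiff]
      rw [this, sub_self, zero_smul, smul_zero]
  · intro h
    exact absurd (SimpleGraph.mem_edgeFinset.2 ((SimpleGraph.mem_edgeSet T).2 hab)) h

noncomputable def Yw {u v : V} (p : T.Walk u v) : V → ℝ :=
  (p.darts.map (fun d => fv T hT w d.toProd.1 d.toProd.2)).sum

lemma Yw_nil (u : V) : Yw T hT w (SimpleGraph.Walk.nil : T.Walk u u) = 0 := by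
  simp [Yw]

lemma Yw_cons {u x v : V} (h : T.Adj u x) (p : T.Walk x v) :
    Yw T hT w (SimpleGraph.Walk.cons h p) = fv T hT w u x + Yw T hT w p := by
  simp [Yw, SimpleGraph.Walk.darts_cons]

lemma chiv_add (u x v : V) : chiv u x + chiv x v = chiv (V := V) u v := by
  ext i; simp [chiv]

lemma lap_Yw [DecidableRel T.Adj] (hws : ∀ e ∈ T.edgeSet, w e ≠ 0) {u v : V}
    (p : T.Walk u v) : lapW T w *ᵥ Yw T hT w p = chiv u v := by
  induction p with
  | nil => rw [Yw_nil, mulVec_zero]; ext i; simp [chiv]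
  | cons h q ih =>
    rw [Yw_cons, mulVec_add, ih, fv_mulVec T hT w h (hws _ h), chiv_add]

lemma Yw_const {x v : V} (q : T.Walk x v) {u u' : V} (huu' : T.Adj u u')
    (hq : ∀ d ∈ q.darts, d.edge ≠ s(u, u')) : Yw T hT w q u = Yw T hT w q u' := by
  induction q with
  | nil => simp [Yw]
  | cons h p ih =>
    rename_i a b c
    rw [Yw_cons]
    simp only [Pi.add_apply]
    have h1 : fv T hT w a b u = fv T hT w a b u' := by
      have hne : s(a, b) ≠ s(u, u') := by
        have := hq ⟨(a, b), h⟩ (by simp [SimpleGraph.Walk.darts_cons])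
        simpa [SimpleGraph.Dart.edge] using this
      have hiff := pth_edges_mem_iff T hT huu' b (e := s(a, b)) hne
      simp only [fv, hiff]
    rw [h1, ih (fun d hd => hq d (by simp [SimpleGraph.Walk.darts_cons, hd]))]

lemma Yw_spec {u v : V} (p : T.Walk u v) (hp : p.IsPath) :
    Yw T hT w p u - Yw T hT w p v = (p.edges.map (fun e => 1 / w e)).sum := by
  induction p with
  | nil => simp [Yw]
  | cons h q ih =>
    rename_i a b c
    rw [SimpleGraph.Walk.cons_isPath_iff] at hp
    obtain ⟨hq, hu⟩ := hp
    have hne : s(a, b) ∉ q.edges := fun hmem =>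
      hu (q.fst_mem_support_of_mem_edges hmem)
    have hYq : Yw T hT w q a = Yw T hT w q b := by
      refine Yw_const T hT w q h (fun d hd hde => hne ?_)
      rw [← hde]
      exact List.mem_map_of_mem hd
    have h2 : fv T hT w a b a = 1 / w s(a, b) := by
      simp [fv, edges_pth_adj T hT h]
    have h3 : fv T hT w a b c = 0 := by
      have hpvx : pth T hT c b = q.reverse := pth_eq T hT q.reverse hq.reverse
      simp [fv, hpvx, SimpleGraph.Walk.edges_reverse, List.mem_reverse, hne]
    rw [Yw_cons, Pi.add_apply, Pi.add_apply, h2, h3, hYq]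
    rw [SimpleGraph.Walk.edges_cons, List.map_cons, List.sum_cons, ← ih hq]
    ring

end Aux2


/-- If `G` is a connected weighted graph with positive edge weights, `T` is a spanning tree
of `G`, and `M` is the Moore–Penrose pseudoinverse of `L_T`, then
`trace(L_G · M) = st_T(G)`. -/
theorem trace_lap_mul_pinv_eq_stretch {V : Type*} [Fintype V] [DecidableEq V]
    (G T : SimpleGraph V) [DecidableRel G.Adj] [DecidableRel T.Adj]
    (hG : G.Connected) (hT : T.IsTree) (hTG : T ≤ G)
    (w : Sym2 V → ℝ) (hw : ∀ e ∈ G.edgeSet, 0 < w e)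
    (M : Matrix V V ℝ)
    (hM1 : lapW T w * M * lapW T w = lapW T w)
    (hM2 : M * lapW T w * M = M)
    (hM3 : (lapW T w * M)ᵀ = lapW T w * M)
    (hM4 : (M * lapW T w)ᵀ = M * lapW T w) :
    (lapW G w * M).trace = stretch G T hT w := by
  have hws : ∀ e ∈ T.edgeSet, w e ≠ 0 := fun e he =>
    (hw e (SimpleGraph.edgeSet_mono hTG he)).ne'
  rw [show lapW G w = ∑ e ∈ G.edgeFinset, w e • edgeLap e from rfl, Finset.sum_mul,
    Matrix.trace_sum, stretch]
  refine Finset.sum_congr rfl fun e he => ?_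
  induction e using Sym2.ind with
  | _ u v =>
    rw [smul_mul_assoc, Matrix.trace_smul, trace_edgeLap_mul]
    have hy := lap_Yw T hT w hws (pth T hT u v)
    rw [quad_form_eq (lapW T w) M (lapW_transpose T w) hM1 _ _ hy, dotProduct_chiv]
    have hval : Yw T hT w (pth T hT u v) u - Yw T hT w (pth T hT u v) v
        = treePathWeight T hT w u v := Yw_spec T hT w _ (pth_isPath T hT u v)
    rw [hval]
    simp [stretchEdge]
end

section
/- Let A and B be real symmetric positive semidefinite n×n matrices. Then every root of the characteristic polynomial of the product A · B over ℂ is a nonnegative real number; that is, every eigenvalue λ of A · B satisfies Im(λ) = 0 and Re(λ) ≥ 0. -/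
open Matrix Polynomial
open scoped ComplexOrder

/-- A real symmetric matrix with nonnegative quadratic form maps to a complex PSD matrix. -/
lemma aux_posSemidef_map {n : ℕ} {M : Matrix (Fin n) (Fin n) ℝ}
    (hM : M.IsSymm) (h : ∀ x : Fin n → ℝ, 0 ≤ x ⬝ᵥ (M *ᵥ x)) :
    (M.map (algebraMap ℝ ℂ)).PosSemidef := by
  have hpsd : M.PosSemidef :=
    .of_dotProduct_mulVec_nonneg (by rwa [Matrix.IsHermitian, conjTranspose_eq_transpose_of_trivial])
     (fun x => by simpa using h x)
  obtain ⟨C, rfl⟩ : ∃ C : Matrix (Fin n) (Fin n) ℝ, M = Cᴴ * C := by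
    open scoped MatrixOrder in
    exact ⟨CFC.sqrt M, by
      rw [((CFC.sqrt_nonneg M).posSemidef.1 : (CFC.sqrt M)ᴴ = CFC.sqrt M),
        CFC.sqrt_mul_sqrt_self M hpsd.nonneg]⟩
  have hmap : ((Cᴴ * C).map (algebraMap ℝ ℂ)) =
      (C.map (algebraMap ℝ ℂ))ᴴ * (C.map (algebraMap ℝ ℂ)) := by
    rw [Matrix.map_mul]
    congr 1
    ext i j
    simp [conjTranspose_apply, Complex.conj_ofReal]
  rw [hmap]
  exact posSemidef_conjTranspose_mul_self _

/-- Evaluating the characteristic polynomial. -/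
lemma aux_eval_charpoly {n : ℕ} (N : Matrix (Fin n) (Fin n) ℂ) (μ : ℂ) :
    Polynomial.eval μ N.charpoly = (μ • (1 : Matrix (Fin n) (Fin n) ℂ) - N).det := by
  rw [Matrix.charpoly, ← Polynomial.coe_evalRingHom, RingHom.map_det]
  congr 1
  ext i j
  by_cases hij : i = j <;>
    simp [hij, charmatrix_apply, Matrix.one_apply, Matrix.diagonal_apply, smul_eq_mul]

/-- If `A` and `B` are real symmetric positive semidefinite `n × n` matrices, then every
root of the characteristic polynomial of `A · B` over `ℂ` is a nonnegative real number. -/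
theorem eigenvalues_mul_posSemidef_real_nonneg {n : ℕ}
    (A B : Matrix (Fin n) (Fin n) ℝ)
    (hA : A.IsSymm) (hB : B.IsSymm)
    (hA' : ∀ x : Fin n → ℝ, 0 ≤ x ⬝ᵥ (A *ᵥ x))
    (hB' : ∀ x : Fin n → ℝ, 0 ≤ x ⬝ᵥ (B *ᵥ x)) :
    ∀ μ : ℂ, (((A * B).charpoly).map (algebraMap ℝ ℂ)).IsRoot μ →
      μ.im = 0 ∧ 0 ≤ μ.re := by
  intro μ hμ
  classical
  set f := algebraMap ℝ ℂ with hf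
  set A' := A.map f with hA'def
  set B' := B.map f with hB'def
  have hA2 : A'.PosSemidef := aux_posSemidef_map hA hA'
  have hB2 : B'.PosSemidef := aux_posSemidef_map hB hB'
  -- translate root into an eigenvector
  have hmapAB : (A * B).map f = A' * B' := by
    rw [hA'def, hB'def, Matrix.map_mul]
  have hdet : (μ • (1 : Matrix (Fin n) (Fin n) ℂ) - A' * B').det = 0 := by
    rw [← aux_eval_charpoly, ← hmapAB, Matrix.charpoly_map]
    exact hμ
  obtain ⟨v, hv, hv0⟩ := Matrix.exists_mulVec_eq_zero_iff.mpr hdet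
  have heig : (A' * B') *ᵥ v = μ • v := by
    have h1 : (μ • (1 : Matrix (Fin n) (Fin n) ℂ)) *ᵥ v - (A' * B') *ᵥ v = 0 := by
      rw [← Matrix.sub_mulVec]; exact hv0
    have h2 : (μ • (1 : Matrix (Fin n) (Fin n) ℂ)) *ᵥ v = μ • v := by
      rw [Matrix.smul_mulVec, Matrix.one_mulVec]
    rw [h2] at h1
    linear_combination (norm := module) -h1
  have hAw : A' *ᵥ (B' *ᵥ v) = μ • v := by
    rw [Matrix.mulVec_mulVec]; exact heig
  -- quadratic forms
  set b : ℂ := star v ⬝ᵥ (B' *ᵥ v) with hbdef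
  have hb : 0 ≤ b := hB2.dotProduct_mulVec_nonneg v
  have hC : (B' * A' * B').PosSemidef := by
    have := hA2.conjTranspose_mul_mul_same B'
    rwa [hB2.1] at this
  set c : ℂ := star v ⬝ᵥ ((B' * A' * B') *ᵥ v) with hcdef
  have hc : 0 ≤ c := hC.dotProduct_mulVec_nonneg v
  have hcb : c = μ * b := by
    rw [hcdef, hbdef]
    have : (B' * A' * B') *ᵥ v = μ • (B' *ᵥ v) := by
      rw [← Matrix.mulVec_mulVec, ← Matrix.mulVec_mulVec, hAw, Matrix.mulVec_smul]
    rw [this, dotProduct_smul, smul_eq_mul]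
  -- extract real/imaginary information
  rw [Complex.le_def] at hb hc
  simp only [Complex.zero_re, Complex.zero_im] at hb hc
  by_cases hb0 : b = 0
  · have hBv : B' *ᵥ v = 0 := (hB2.dotProduct_mulVec_zero_iff v).mp (by rw [← hbdef, hb0])
    have hμ0 : μ • v = 0 := by rw [← hAw, hBv, Matrix.mulVec_zero]
    rcases smul_eq_zero.mp hμ0 with h | h
    · simp [h]
    · exact absurd h hv
  · have hbim : b.im = 0 := hb.2.symm
    have hbre : 0 < b.re := lt_of_le_of_ne hb.1 (by
      intro h
      exact hb0 (Complex.ext h.symm hbim))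
    have him : c.im = μ.im * b.re := by
      rw [hcb, Complex.mul_im, hbim, mul_zero, zero_add]
    have hre : c.re = μ.re * b.re := by
      rw [hcb, Complex.mul_re, hbim, mul_zero, sub_zero]
    constructor
    · have : μ.im * b.re = 0 := by rw [← him, ← hc.2]
      rcases mul_eq_zero.mp this with h | h
      · exact h
      · exact absurd h (ne_of_gt hbre)
    · have : 0 ≤ μ.re * b.re := hre ▸ hc.1
      exact nonneg_of_mul_nonneg_right (by linarith [this]) hbre
end

section
/- Let 0 < l ≤ u be real numbers, let q be a natural number, let Λ be a finite multiset of real numbers such that every element of Λ is at least l and at most q elements of Λ (counted with multiplicity) are greater than u, and let 0 < ε < 2. Then there exists a real polynomial p of degree at most q + ⌈(ln(2/ε)/2)·√(u/l)⌉ such that p(0) = 1 and |p(λ)| ≤ ε for every λ ∈ Λ. -/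
open Polynomial

private theorem axl_log_ineq (r : ℝ) (h0 : 0 ≤ r) (h1 : r < 1) :
    2 * r ≤ Real.log ((1 + r) / (1 - r)) := by
  set f : ℝ → ℝ := fun x => Real.log (1 + x) - Real.log (1 - x) - 2 * x with hf
  have hderiv : ∀ x ∈ Set.Ioo (0:ℝ) r, HasDerivAt f ((1+x)⁻¹ + (1-x)⁻¹ - 2) x := by
    intro x hx
    have hx1 : x < 1 := lt_of_lt_of_le hx.2 h1.le
    have ha : (1:ℝ) + x ≠ 0 := by nlinarith [hx.1]
    have hb : (1:ℝ) - x ≠ 0 := by nlinarith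
    have d1 : HasDerivAt (fun x : ℝ => Real.log (1 + x)) (1+x)⁻¹ x := by
      have hi : HasDerivAt (fun x : ℝ => 1 + x) 1 x := (hasDerivAt_id x).const_add 1
      have := (Real.hasDerivAt_log ha).comp x hi; rw [mul_one] at this; exact this
    have d2 : HasDerivAt (fun x : ℝ => Real.log (1 - x)) (-(1-x)⁻¹) x := by
      have hi : HasDerivAt (fun x : ℝ => 1 - x) (-1) x := by
        exact (hasDerivAt_id x).const_sub 1
      have := (Real.hasDerivAt_log hb).comp x hi; rw [mul_neg, mul_one] at this; exact this
    have d3 : HasDerivAt (fun x : ℝ => 2 * x) 2 x := by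
      simpa using (hasDerivAt_id x).const_mul 2
    have := (d1.sub d2).sub d3
    rw [sub_neg_eq_add] at this; exact this
  have cont : ContinuousOn f (Set.Icc 0 r) := by
    intro x hx
    have hx1 : x < 1 := lt_of_le_of_lt hx.2 h1
    have ha : (1:ℝ) + x ≠ 0 := by nlinarith [hx.1]
    have hb : (1:ℝ) - x ≠ 0 := by nlinarith
    have : ContinuousAt f x := by
      have c1 : ContinuousAt (fun x : ℝ => Real.log (1 + x)) x :=
        (Real.continuousAt_log ha).comp (by fun_prop)
      have c2 : ContinuousAt (fun x : ℝ => Real.log (1 - x)) x :=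
        (Real.continuousAt_log hb).comp (by fun_prop)
      exact (c1.sub c2).sub (by fun_prop)
    exact this.continuousWithinAt
  have key : MonotoneOn f (Set.Icc 0 r) := by
    apply monotoneOn_of_deriv_nonneg (convex_Icc 0 r) cont
    · intro x hx
      rw [interior_Icc] at hx
      exact (hderiv x hx).differentiableAt.differentiableWithinAt
    · intro x hx
      rw [interior_Icc] at hx
      rw [(hderiv x hx).deriv]
      have hx1 : x < 1 := lt_of_lt_of_le hx.2 h1.le
      have ha : (0:ℝ) < 1 + x := by nlinarith [hx.1]
      have hb : (0:ℝ) < 1 - x := by nlinarith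
      have : (1+x)⁻¹ + (1-x)⁻¹ - 2 = 2 * x^2 / ((1+x)*(1-x)) := by
        field_simp; ring
      rw [this]; positivity
  have h := key (Set.left_mem_Icc.mpr h0) (Set.right_mem_Icc.mpr h0) h0
  have hf0 : f 0 = 0 := by simp [hf]
  have hfr : f r = Real.log ((1+r)/(1-r)) - 2*r := by
    rw [hf]
    have ha : (0:ℝ) < 1 + r := by linarith
    have hb : (0:ℝ) < 1 - r := by linarith
    rw [Real.log_div ha.ne' hb.ne']
  rw [hf0] at h
  rw [hfr] at h
  linarith

private theorem axl_T_cosh (n : ℤ) (t : ℝ) :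
    (Polynomial.Chebyshev.T ℝ n).eval (Real.cosh t) = Real.cosh (n * t) := by
  have h := Polynomial.Chebyshev.T_complex_cos (↑t * Complex.I) n
  rw [Complex.cos_mul_I] at h
  have h2 : (↑n : ℂ) * (↑t * Complex.I) = ↑((n : ℝ) * t) * Complex.I := by push_cast; ring
  rw [h2, Complex.cos_mul_I] at h
  have := Polynomial.Chebyshev.complex_ofReal_eval_T (Real.cosh t) n
  rw [Complex.ofReal_cosh, h, ← Complex.ofReal_cosh] at this
  exact_mod_cast this

private theorem axl_abs_T_le (n : ℤ) (x : ℝ) (hx : x ∈ Set.Icc (-1:ℝ) 1) :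
    |(Polynomial.Chebyshev.T ℝ n).eval x| ≤ 1 := by
  have : x = Real.cos (Real.arccos x) := (Real.cos_arccos hx.1 hx.2).symm
  rw [this, Polynomial.Chebyshev.T_real_cos]
  exact Real.abs_cos_le_one _

private theorem axl_natDegree_T_le (n : ℕ) :
    (Polynomial.Chebyshev.T ℝ (n:ℤ)).natDegree ≤ n := by
  induction n using Nat.strong_induction_on with
  | _ n ih =>
    match n with
    | 0 => simp
    | 1 => simp
    | (m+2) =>
      have h : Polynomial.Chebyshev.T ℝ ((m:ℤ)+2)
          = 2 * X * Polynomial.Chebyshev.T ℝ ((m:ℤ)+1) - Polynomial.Chebyshev.T ℝ (m:ℤ) :=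
        Polynomial.Chebyshev.T_add_two ℝ (m:ℤ)
      have hcast : ((m+2 : ℕ) : ℤ) = (m:ℤ) + 2 := by push_cast; ring
      rw [hcast, h]
      apply le_trans (natDegree_sub_le _ _)
      have h1 : (2 * X * Polynomial.Chebyshev.T ℝ ((m:ℤ)+1)).natDegree ≤ m + 2 := by
        apply le_trans (natDegree_mul_le)
        have : ((2 : ℝ[X]) * X).natDegree ≤ 1 := by
          apply le_trans (natDegree_mul_le); simp
        have h2 := ih (m+1) (by omega)
        rw [show ((m+1:ℕ):ℤ) = (m:ℤ)+1 by push_cast; ring] at h2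
        omega
      have h3 := ih m (by omega)
      simp only [max_le_iff]
      exact ⟨h1, by omega⟩

private theorem axl_abs_prod_le_one (s : Multiset ℝ) (h : ∀ y ∈ s, |y| ≤ 1) :
    |s.prod| ≤ 1 := by
  induction s using Multiset.induction_on with
  | empty => simp
  | cons a s ih =>
    rw [Multiset.prod_cons, abs_mul]
    have h1 := h a (Multiset.mem_cons_self a s)
    have h2 := ih (fun y hy => h y (Multiset.mem_cons_of_mem hy))
    have := mul_le_mul h1 h2 (abs_nonneg _) (by norm_num : (0:ℝ) ≤ 1)
    simpa using this

/-- The polynomial-approximation content of the Axelsson–Lindskog bound: if every element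
of a finite multiset `Λ` of reals is at least `l > 0` and at most `q` of them (with
multiplicity) exceed `u ≥ l`, then for every `0 < ε < 2` there is a real polynomial `p` of
degree at most `q + ⌈(ln(2/ε)/2)·√(u/l)⌉` with `p(0) = 1` and `|p(λ)| ≤ ε` on `Λ`. -/
theorem exists_low_degree_poly_small_on_spectrum
    (l u : ℝ) (hl : 0 < l) (hlu : l ≤ u) (q : ℕ) (Λ : Multiset ℝ)
    (hΛ : ∀ x ∈ Λ, l ≤ x) (hq : (Λ.filter fun x => u < x).card ≤ q)
    (ε : ℝ) (hε0 : 0 < ε) (hε2 : ε < 2) :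
    ∃ p : ℝ[X],
      p.natDegree ≤ q + ⌈Real.log (2 / ε) / 2 * Real.sqrt (u / l)⌉₊ ∧
      p.eval 0 = 1 ∧ ∀ x ∈ Λ, |p.eval x| ≤ ε := by
  have hu0 : 0 < u := lt_of_lt_of_le hl hlu
  set k := ⌈Real.log (2 / ε) / 2 * Real.sqrt (u / l)⌉₊ with hkdef
  have hcpos : 0 < Real.log (2 / ε) / 2 * Real.sqrt (u / l) := by
    have h1 : 0 < Real.log (2/ε) := Real.log_pos ((one_lt_div hε0).mpr hε2)
    have h2 : 0 < Real.sqrt (u/l) := Real.sqrt_pos.mpr (div_pos hu0 hl)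
    positivity
  have hk1 : 1 ≤ k := Nat.one_le_iff_ne_zero.mpr (by
    simp only [hkdef, ne_eq, Nat.ceil_eq_zero, not_le]
    exact hcpos)
  -- the outlier factor polynomial
  set g : ℝ[X] := ((Λ.filter fun x => u < x).map (fun a => 1 - C a⁻¹ * X)).prod with hgdef
  have hgdeg : g.natDegree ≤ q := by
    refine le_trans (natDegree_multiset_prod_le _) ?_
    rw [Multiset.map_map]
    refine le_trans (Multiset.sum_le_card_nsmul _ 1 ?_) ?_
    · intro x hx
      obtain ⟨a, _, rfl⟩ := Multiset.mem_map.mp hx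
      simp only [Function.comp_apply]
      refine le_trans (natDegree_sub_le _ _) ?_
      simp only [natDegree_one, max_le_iff]
      exact ⟨by omega, le_trans (natDegree_C_mul_le _ _) (by simp)⟩
    · simp only [Multiset.card_map, smul_eq_mul, mul_one]
      exact hq
  have hg0 : g.eval 0 = 1 := by
    rw [hgdef, eval_multiset_prod, Multiset.map_map]
    rw [Multiset.map_congr rfl (fun a _ => by simp : ∀ a ∈ (Λ.filter fun x => u < x),
      (Function.comp (eval 0) fun a => 1 - C a⁻¹ * X) a = (1:ℝ))]
    simp
  have hgout : ∀ x ∈ Λ, u < x → g.eval x = 0 := by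
    intro x hx hux
    rw [hgdef, eval_multiset_prod, Multiset.map_map]
    apply Multiset.prod_eq_zero
    refine Multiset.mem_map.mpr ⟨x, Multiset.mem_filter.mpr ⟨hx, hux⟩, ?_⟩
    have hx0 : x ≠ 0 := by have := hΛ x hx; intro h; rw [h] at this; linarith
    simp [inv_mul_cancel₀ hx0]
  have hgin : ∀ x, l ≤ x → x ≤ u → |g.eval x| ≤ 1 := by
    intro x hlx hxu
    rw [hgdef, eval_multiset_prod, Multiset.map_map]
    apply axl_abs_prod_le_one
    intro y hy
    obtain ⟨a, ha, rfl⟩ := Multiset.mem_map.mp hy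
    have hua : u < a := (Multiset.mem_filter.mp ha).2
    have ha0 : 0 < a := by linarith
    simp only [Function.comp_apply, eval_sub, eval_one, eval_mul, eval_C, eval_X]
    rw [abs_le]
    constructor
    · have : a⁻¹ * x ≤ 1 := by
        rw [inv_mul_le_iff₀ ha0]; linarith
      linarith
    · have : 0 ≤ a⁻¹ * x := mul_nonneg (inv_nonneg.mpr ha0.le) (by linarith)
      linarith
  rcases eq_or_lt_of_le hlu with heq | hlt
  · -- degenerate case l = u
    refine ⟨(1 - C l⁻¹ * X) * g, ?_, ?_, ?_⟩
    · refine le_trans (natDegree_mul_le) ?_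
      have h1 : (1 - C l⁻¹ * X : ℝ[X]).natDegree ≤ 1 := by
        refine le_trans (natDegree_sub_le _ _) ?_
        simp only [natDegree_one, max_le_iff]
        exact ⟨by omega, le_trans (natDegree_C_mul_le _ _) (by simp)⟩
      omega
    · simp [hg0]
    · intro x hx
      by_cases hux : u < x
      · rw [eval_mul, hgout x hx hux, mul_zero, abs_zero]
        exact hε0.le
      · have hxl : x = l := le_antisymm (by rw [heq]; exact not_lt.mp hux) (hΛ x hx)
        rw [eval_mul, hxl]
        simp [inv_mul_cancel₀ hl.ne', hε0.le]
  · -- main case l < u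
    set r := Real.sqrt (l/u) with hrdef
    have hr2 : r^2 = l/u := Real.sq_sqrt (le_of_lt (div_pos hl hu0))
    have hr0 : 0 < r := Real.sqrt_pos.mpr (div_pos hl hu0)
    have hltone : l/u < 1 := (div_lt_one hu0).mpr hlt
    have hr1 : r < 1 := by nlinarith
    set t := Real.log ((1+r)/(1-r)) with htdef
    have hfrac : (0:ℝ) < (1+r)/(1-r) := by apply div_pos <;> linarith
    have hexp : Real.exp t = (1+r)/(1-r) := Real.exp_log hfrac
    have ht : 2 * r ≤ t := axl_log_ineq r hr0.le hr1
    have htpos : 0 < t := lt_of_lt_of_le (by positivity) ht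
    have hcosh : Real.cosh t = (u+l)/(u-l) := by
      rw [Real.cosh_eq, Real.exp_neg, hexp]
      rw [show ((1+r)/(1-r))⁻¹ = (1-r)/(1+r) by rw [inv_div]]
      have h1 : (1:ℝ) - r ≠ 0 := by linarith
      have h2 : (1:ℝ) + r ≠ 0 := by linarith
      have h3 : u - l ≠ 0 := by linarith
      field_simp
      have hr2' : r^2 * u = l := by rw [hr2]; field_simp
      linear_combination 4 * hr2'
    -- lower bound on cosh (k * t)
    have hklet : Real.log (2/ε) ≤ (k:ℝ) * t := by
      have hkc : Real.log (2 / ε) / 2 * Real.sqrt (u / l) ≤ (k:ℝ) := Nat.le_ceil _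
      have hsqrt : Real.sqrt (u/l) * r = 1 := by
        rw [hrdef, ← Real.sqrt_mul (by positivity)]
        rw [show u/l * (l/u) = 1 by field_simp]
        exact Real.sqrt_one
      have h1 : Real.log (2 / ε) / 2 * Real.sqrt (u / l) * (2*r) ≤ (k:ℝ) * (2*r) :=
        mul_le_mul_of_nonneg_right hkc (by positivity)
      have h2 : (k:ℝ) * (2*r) ≤ (k:ℝ) * t :=
        mul_le_mul_of_nonneg_left ht (by positivity)
      have h3 : Real.log (2 / ε) / 2 * Real.sqrt (u / l) * (2*r) = Real.log (2/ε) := by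
        rw [show Real.log (2 / ε) / 2 * Real.sqrt (u / l) * (2*r)
          = Real.log (2/ε) * (Real.sqrt (u/l) * r) by ring, hsqrt, mul_one]
      linarith
    have hcoshk : ε⁻¹ ≤ Real.cosh ((k:ℝ) * t) := by
      rw [Real.cosh_eq]
      have he : Real.exp (Real.log (2/ε)) ≤ Real.exp ((k:ℝ)*t) := Real.exp_le_exp.mpr hklet
      rw [Real.exp_log (by positivity)] at he
      have hpos : 0 < Real.exp (-((k:ℝ)*t)) := Real.exp_pos _
      have : (2/ε)/2 = ε⁻¹ := by field_simp
      linarith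
    have hcoshpos : 0 < Real.cosh ((k:ℝ)*t) := Real.cosh_pos _
    have hinv : (Real.cosh ((k:ℝ)*t))⁻¹ ≤ ε := by
      have := inv_anti₀ (inv_pos.mpr hε0) hcoshk
      rwa [inv_inv] at this
    have hul : (0:ℝ) < u - l := by linarith
    -- the Chebyshev part
    set L : ℝ[X] := C ((u+l)/(u-l)) - C (2/(u-l)) * X with hLdef
    set h : ℝ[X] := (Polynomial.Chebyshev.T ℝ (k:ℤ)).comp L with hhdef
    have hL0 : L.eval 0 = Real.cosh t := by
      simp [hLdef, hcosh]
    have hh0 : h.eval 0 = Real.cosh ((k:ℝ)*t) := by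
      rw [hhdef, eval_comp, hL0, axl_T_cosh]
      norm_num
    refine ⟨C ((Real.cosh ((k:ℝ)*t))⁻¹) * (g * h), ?_, ?_, ?_⟩
    · refine le_trans (natDegree_C_mul_le _ _) ?_
      refine le_trans (natDegree_mul_le) ?_
      have hhdeg : h.natDegree ≤ k := by
        refine le_trans (natDegree_comp_le) ?_
        have h1 : L.natDegree ≤ 1 := by
          refine le_trans (natDegree_sub_le _ _) ?_
          simp only [natDegree_C, max_le_iff]
          exact ⟨by omega, le_trans (natDegree_C_mul_le _ _) (by simp)⟩
        have h2 := axl_natDegree_T_le k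
        calc (Polynomial.Chebyshev.T ℝ (k:ℤ)).natDegree * L.natDegree
            ≤ k * 1 := Nat.mul_le_mul h2 h1
          _ = k := by omega
      omega
    · rw [eval_mul, eval_mul, eval_C, hg0, hh0, one_mul,
        inv_mul_cancel₀ hcoshpos.ne']
    · intro x hx
      by_cases hux : u < x
      · rw [eval_mul, eval_mul, hgout x hx hux, zero_mul, mul_zero, abs_zero]
        exact hε0.le
      · have hxu : x ≤ u := not_lt.mp hux
        have hlx : l ≤ x := hΛ x hx
        have hLx : L.eval x = (u + l - 2*x)/(u-l) := by
          simp only [hLdef, eval_sub, eval_mul, eval_C, eval_X]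
          field_simp
        have hmem : L.eval x ∈ Set.Icc (-1:ℝ) 1 := by
          rw [hLx]
          constructor
          · rw [le_div_iff₀ hul]; linarith
          · rw [div_le_one hul]; linarith
        have hT := axl_abs_T_le (k:ℤ) (L.eval x) hmem
        rw [eval_mul, eval_mul, eval_C, abs_mul, abs_mul,
          abs_of_pos (inv_pos.mpr hcoshpos)]
        calc (Real.cosh ((k:ℝ)*t))⁻¹ * (|g.eval x| * |((Polynomial.Chebyshev.T ℝ (k:ℤ)).comp L).eval x|)
            ≤ (Real.cosh ((k:ℝ)*t))⁻¹ * (1 * 1) := by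
              apply mul_le_mul_of_nonneg_left _ (inv_pos.mpr hcoshpos).le
              apply mul_le_mul (hgin x hlx hxu) _ (abs_nonneg _) (by norm_num)
              rw [eval_comp]
              exact hT
          _ ≤ ε := by simpa using hinv
end
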